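/- Let f : ℝ^p_{≥0} → ℝ be quasi-concave, lower semi-continuous, and coordinatewise non-decreasing. Let σ₁ ≥ … ≥ σ_r > 0 be the singular values of a rank-r matrix X and let p > r. Then any minimizer γ* of f(γ) subject to γ = (1/2)(Vᵀ⊙Vᵀ + Hᵀ⊙Hᵀ)σ over V, H ∈ ℝ^{r×p} with VHᵀ = I_{r×r} can be taken of the form γ* = Π_{p×r}σ, where Π_{p×r} consists of the first r columns of a p×p permutation matrix; equivalently γ* is a permutation of (σ₁,…,σ_r,0,…,0) ∈ ℝ^p. -/

import Mathlib

open Matrix BigOperators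

open Finset Pointwise

lemma abel_nonneg (r : ℕ) (D x : ℕ → ℝ) (hD : ∀ m, m < r → D (m+1) ≤ D m)
    (hDr : 0 ≤ D r) (hx : ∀ m, m ≤ r → 0 ≤ ∑ i ∈ Finset.range m, x i) :
    0 ≤ ∑ i ∈ Finset.range r, D i * x i := by
  induction r generalizing D with
  | zero => simp
  | succ n ih =>
    have hDn : 0 ≤ D n := le_trans hDr (hD n (Nat.lt_succ_self n))
    have h1 : 0 ≤ ∑ i ∈ Finset.range n, (D i - D n) * x i := by
      refine ih (fun i => D i - D n) (fun m hm => ?_) (by simp) (fun m hm => hx m (hm.trans (Nat.le_succ n)))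
      exact sub_le_sub_right (hD m (hm.trans (Nat.lt_succ_self n))) _
    have h2 : 0 ≤ D n * ∑ i ∈ Finset.range (n+1), x i :=
      mul_nonneg hDn (hx (n+1) le_rfl)
    have e1 : ∑ i ∈ Finset.range n, (D i - D n) * x i
        = (∑ i ∈ Finset.range n, D i * x i) - D n * ∑ i ∈ Finset.range n, x i := by
      rw [Finset.mul_sum, ← Finset.sum_sub_distrib]
      exact Finset.sum_congr rfl fun i _ => by ring
    have e2 := Finset.sum_range_succ (fun i => D i * x i) n
    have e3 := Finset.sum_range_succ x n
    simp only [e2]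
    rw [e3] at h2
    nlinarith [h1, h2, e1]
lemma smallest_sum_le {p : ℕ} (m : ℕ) (J T : Finset (Fin p)) (q c : Fin p → ℝ)
    (hTJ : T ⊆ J) (hTm : T.card = m) (hq : ∀ j ∈ J, 0 ≤ q j) (hc : ∀ j ∈ J, 0 ≤ c j)
    (hmin : ∀ t ∈ T, ∀ j ∈ J, j ∉ T → c t ≤ c j)
    (hS : ∀ S ⊆ J, (m : ℝ) - ((J.card : ℝ) - (S.card : ℝ)) ≤ ∑ j ∈ S, q j) :
    ∑ j ∈ T, c j ≤ ∑ j ∈ J, c j * q j := by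
  induction m generalizing J T c with
  | zero =>
    rw [Finset.card_eq_zero.mp hTm]
    simp only [Finset.sum_empty]
    exact Finset.sum_nonneg fun j hj => mul_nonneg (hc j hj) (hq j hj)
  | succ n ih =>
    have hTne : T.Nonempty := Finset.card_pos.mp (by omega)
    obtain ⟨t₀, ht₀T, ht₀min⟩ := Finset.exists_min_image T c hTne
    have ht₀J : t₀ ∈ J := hTJ ht₀T
    have ht₀allJ : ∀ j ∈ J, c t₀ ≤ c j := by
      intro j hj
      by_cases hjT : j ∈ T
      · exact ht₀min j hjT
      · exact hmin t₀ ht₀T j hj hjT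
    have hct₀ : 0 ≤ c t₀ := hc t₀ ht₀J
    have hJcard : 1 ≤ J.card := Finset.card_pos.mpr ⟨t₀, ht₀J⟩
    -- IH applied to erased sets with shifted c
    have hIH : ∑ j ∈ T.erase t₀, (c j - c t₀) ≤ ∑ j ∈ J.erase t₀, (c j - c t₀) * q j := by
      refine ih (J.erase t₀) (T.erase t₀) (fun j => c j - c t₀)
        (Finset.erase_subset_erase _ hTJ) (by rw [Finset.card_erase_of_mem ht₀T, hTm]; rfl)
        (fun j hj => hq j (Finset.mem_of_mem_erase hj))
        (fun j hj => sub_nonneg.mpr (ht₀allJ j (Finset.mem_of_mem_erase hj)))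
        (fun t ht j hj hjT => sub_le_sub_right
          (hmin t (Finset.mem_of_mem_erase ht) j (Finset.mem_of_mem_erase hj)
            (fun hjT' => hjT (Finset.mem_erase.mpr ⟨(Finset.mem_erase.mp hj).1, hjT'⟩))) _)
        (fun S hS' => by
          have h1 := hS S (hS'.trans (Finset.erase_subset _ _))
          have h2 : (J.erase t₀).card = J.card - 1 := Finset.card_erase_of_mem ht₀J
          rw [h2, Nat.cast_sub hJcard]
          push_cast at h1 ⊢
          linarith)
    -- main computation
    have hsplit : ∑ j ∈ J, c j * q j
        = (∑ j ∈ J, (c j - c t₀) * q j) + c t₀ * ∑ j ∈ J, q j := by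
      rw [Finset.mul_sum, ← Finset.sum_add_distrib]
      exact Finset.sum_congr rfl fun j _ => by ring
    have hfull : ((n:ℝ) + 1) ≤ ∑ j ∈ J, q j := by
      have := hS J (le_refl J)
      push_cast at this
      linarith
    have herase : ∑ j ∈ J, (c j - c t₀) * q j = ∑ j ∈ J.erase t₀, (c j - c t₀) * q j := by
      exact (Finset.sum_erase J (a := t₀) (f := fun j => (c j - c t₀) * q j) (by simp)).symm
    have hTsum : ∑ j ∈ T, c j = (∑ j ∈ T.erase t₀, (c j - c t₀)) + (T.card : ℝ) * c t₀ := by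
      rw [Finset.sum_sub_distrib, Finset.sum_const, ← Finset.add_sum_erase _ _ ht₀T]
      rw [Finset.card_erase_of_mem ht₀T, hTm]
      push_cast [hTm]
      ring
    rw [hTsum, hsplit, herase, hTm]
    push_cast
    nlinarith [hIH, hfull, hct₀]
lemma proj_bound {r p m : ℕ} (V H : Matrix (Fin r) (Fin p) ℝ)
    (hVH : V * Hᵀ = 1) (hm : m ≤ r) (S : Finset (Fin p)) :
    (m : ℝ) + (S.card : ℝ) - (p : ℝ) ≤
      ∑ j ∈ S, ∑ i : Fin m, (V (Fin.castLE hm i) j ^ 2 + H (Fin.castLE hm i) j ^ 2) / 2 := by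
  classical
  let v : Fin p → EuclideanSpace ℝ (Fin m) := fun j => WithLp.toLp 2 (fun i => V (Fin.castLE hm i) j)
  let h : Fin p → EuclideanSpace ℝ (Fin m) := fun j => WithLp.toLp 2 (fun i => H (Fin.castLE hm i) j)
  have hentry : ∀ a b : Fin m, ∑ j : Fin p, V (Fin.castLE hm a) j * H (Fin.castLE hm b) j
      = if a = b then 1 else 0 := by
    intro a b
    have := congrFun (congrFun hVH (Fin.castLE hm a)) (Fin.castLE hm b)
    rw [Matrix.mul_apply, Matrix.one_apply] at this
    simp only [Matrix.transpose_apply] at this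
    rw [this]
    congr 1
    simp [Fin.ext_iff, Fin.castLE]
  -- key identity
  have hkey : ∀ x : EuclideanSpace ℝ (Fin m), (inner ℝ x x : ℝ) = ∑ j : Fin p, (inner ℝ x (v j) : ℝ) * (inner ℝ x (h j) : ℝ) := by
    intro x
    simp only [PiLp.inner_apply, RCLike.inner_apply, starRingEnd_apply, star_trivial]
    have : ∀ j : Fin p, (∑ i, v j i * x i) * (∑ i, h j i * x i)
        = ∑ a : Fin m, ∑ b : Fin m, x a * x b * (V (Fin.castLE hm a) j * H (Fin.castLE hm b) j) := by
      intro j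
      rw [Finset.sum_mul_sum]
      exact Finset.sum_congr rfl fun a _ => Finset.sum_congr rfl fun b _ => by ring
    rw [Finset.sum_congr rfl fun j _ => this j]
    rw [Finset.sum_comm]
    have : ∀ a : Fin m, ∑ j : Fin p, ∑ b : Fin m, x a * x b * (V (Fin.castLE hm a) j * H (Fin.castLE hm b) j)
        = x a * x a := by
      intro a
      rw [Finset.sum_comm]
      have e : ∀ b : Fin m, ∑ j : Fin p, x a * x b * (V (Fin.castLE hm a) j * H (Fin.castLE hm b) j)
          = x a * x b * (if a = b then 1 else 0) := by
        intro b
        rw [← Finset.mul_sum, hentry a b]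
      rw [Finset.sum_congr rfl fun b _ => e b]
      simp
    rw [Finset.sum_congr rfl fun a _ => this a]
  -- subspace spanned by outside columns
  let U : Submodule ℝ (EuclideanSpace ℝ (Fin m)) := Submodule.span ℝ (↑(Sᶜ.image v) : Set _)
  have hdimU : Module.finrank ℝ U ≤ (Sᶜ).card :=
    le_trans (finrank_span_finset_le_card (R := ℝ) (Sᶜ.image v)) Finset.card_image_le
  have htotal : Module.finrank ℝ U + Module.finrank ℝ Uᗮ = m := by
    rw [Submodule.finrank_add_finrank_orthogonal]
    simp [finrank_euclideanSpace]
  let b := stdOrthonormalBasis ℝ ↥Uᗮ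
  let w : Fin (Module.finrank ℝ ↥Uᗮ) → EuclideanSpace ℝ (Fin m) := fun t => (b t : _)
  have hwmem : ∀ t, w t ∈ Uᗮ := fun t => (b t).2
  have hw : Orthonormal ℝ w := by
    have hb := b.orthonormal
    constructor
    · intro t
      exact hb.1 t
    · intro s t hst
      have h2 : (inner ℝ (b s) (b t) : ℝ) = 0 := hb.2 hst
      rw [Submodule.coe_inner] at h2
      exact h2
  have htrace : ((Module.finrank ℝ ↥Uᗮ : ℝ)) =
      ∑ j : Fin p, ∑ t, (inner ℝ (w t) (v j) : ℝ) * (inner ℝ (w t) (h j) : ℝ) := by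
    rw [Finset.sum_comm]
    have h1 : ∀ t, ∑ j : Fin p, (inner ℝ (w t) (v j) : ℝ) * (inner ℝ (w t) (h j) : ℝ) = (1:ℝ) := by
      intro t
      rw [← hkey (w t), real_inner_self_eq_norm_sq, hw.1 t, one_pow]
    rw [Finset.sum_congr rfl fun t _ => h1 t]
    simp
  -- outside terms vanish
  have hvanish : ∀ j ∈ Sᶜ, ∑ t, (inner ℝ (w t) (v j) : ℝ) * (inner ℝ (w t) (h j) : ℝ) = 0 := by
    intro j hj
    have hvj : v j ∈ U := Submodule.subset_span (by
      exact_mod_cast Finset.mem_image_of_mem v hj)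
    refine Finset.sum_eq_zero fun t _ => ?_
    have h0 : (inner ℝ (v j) (w t) : ℝ) = 0 :=
      Submodule.inner_right_of_mem_orthogonal hvj (hwmem t)
    rw [real_inner_comm] at h0
    rw [h0, zero_mul]
  -- Bessel-based per-column bound
  have hcol : ∀ j : Fin p, ∑ t, (inner ℝ (w t) (v j) : ℝ) * (inner ℝ (w t) (h j) : ℝ)
      ≤ ∑ i : Fin m, (V (Fin.castLE hm i) j ^ 2 + H (Fin.castLE hm i) j ^ 2) / 2 := by
    intro j
    have hb1 : ∑ t, (inner ℝ (w t) (v j) : ℝ) ^ 2 ≤ ∑ i : Fin m, V (Fin.castLE hm i) j ^ 2 := by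
      have := hw.sum_inner_products_le (s := Finset.univ) (v j)
      have hn : ‖v j‖ ^ 2 = ∑ i : Fin m, V (Fin.castLE hm i) j ^ 2 := by
        rw [← real_inner_self_eq_norm_sq]
        simp only [PiLp.inner_apply, RCLike.inner_apply, starRingEnd_apply, star_trivial]
        exact Finset.sum_congr rfl fun i _ => by simp [v]; ring
      rw [hn] at this
      simpa [Real.norm_eq_abs, sq_abs] using this
    have hb2 : ∑ t, (inner ℝ (w t) (h j) : ℝ) ^ 2 ≤ ∑ i : Fin m, H (Fin.castLE hm i) j ^ 2 := by
      have := hw.sum_inner_products_le (s := Finset.univ) (h j)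
      have hn : ‖h j‖ ^ 2 = ∑ i : Fin m, H (Fin.castLE hm i) j ^ 2 := by
        rw [← real_inner_self_eq_norm_sq]
        simp only [PiLp.inner_apply, RCLike.inner_apply, starRingEnd_apply, star_trivial]
        exact Finset.sum_congr rfl fun i _ => by simp [h]; ring
      rw [hn] at this
      simpa [Real.norm_eq_abs, sq_abs] using this
    have hamgm : ∑ t, (inner ℝ (w t) (v j) : ℝ) * (inner ℝ (w t) (h j) : ℝ)
        ≤ ∑ t, ((inner ℝ (w t) (v j) : ℝ) ^ 2 + (inner ℝ (w t) (h j) : ℝ) ^ 2) / 2 :=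
      Finset.sum_le_sum fun t _ => by nlinarith [sq_nonneg ((inner ℝ (w t) (v j) : ℝ) - (inner ℝ (w t) (h j) : ℝ))]
    have hhalf : ∑ i : Fin m, (V (Fin.castLE hm i) j ^ 2 + H (Fin.castLE hm i) j ^ 2) / 2
        = ((∑ i : Fin m, V (Fin.castLE hm i) j ^ 2) + ∑ i : Fin m, H (Fin.castLE hm i) j ^ 2) / 2 := by
      rw [← Finset.sum_add_distrib, Finset.sum_div]
    have : ∑ t, ((inner ℝ (w t) (v j) : ℝ) ^ 2 + (inner ℝ (w t) (h j) : ℝ) ^ 2) / 2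
        = ((∑ t, (inner ℝ (w t) (v j) : ℝ) ^ 2) + ∑ t, (inner ℝ (w t) (h j) : ℝ) ^ 2) / 2 := by
      rw [← Finset.sum_add_distrib, Finset.sum_div]
    rw [hhalf]
    linarith
  -- combine
  have hsum : ((Module.finrank ℝ ↥Uᗮ : ℝ)) =
      ∑ j ∈ S, ∑ t, (inner ℝ (w t) (v j) : ℝ) * (inner ℝ (w t) (h j) : ℝ) := by
    rw [htrace, ← Finset.sum_add_sum_compl S
      (fun j => ∑ t, (inner ℝ (w t) (v j) : ℝ) * (inner ℝ (w t) (h j) : ℝ))]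
    rw [Finset.sum_congr rfl hvanish]
    simp
  have hfin : ((Module.finrank ℝ ↥Uᗮ : ℝ)) ≤
      ∑ j ∈ S, ∑ i : Fin m, (V (Fin.castLE hm i) j ^ 2 + H (Fin.castLE hm i) j ^ 2) / 2 := by
    rw [hsum]
    exact Finset.sum_le_sum fun j _ => hcol j
  have hScard : S.card ≤ p := by
    simpa using Finset.card_le_univ S
  have hcompl : (Sᶜ).card = p - S.card := by
    simp [Finset.card_compl]
  have hrank : (m : ℝ) + (S.card : ℝ) - (p : ℝ) ≤ ((Module.finrank ℝ ↥Uᗮ : ℝ)) := by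
    have h1 : Module.finrank ℝ ↥U ≤ p - S.card := hcompl ▸ hdimU
    have h2 : ((Module.finrank ℝ ↥U : ℝ)) + ((Module.finrank ℝ ↥Uᗮ : ℝ)) = (m : ℝ) := by
      exact_mod_cast congrArg (fun n : ℕ => (n : ℝ)) htotal
    have h3 : ((Module.finrank ℝ ↥U : ℝ)) ≤ (p : ℝ) - (S.card : ℝ) := by
      have := (Nat.cast_le (α := ℝ)).mpr h1
      rwa [Nat.cast_sub hScard] at this
    linarith
  linarith

lemma star_lemma {r p : ℕ} (hrp : r ≤ p) (d : Fin r → ℝ) (hd0 : ∀ i, 0 ≤ d i)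
    (hdA : Antitone d) (V H : Matrix (Fin r) (Fin p) ℝ) (hVH : V * Hᵀ = 1)
    (c : Fin p → ℝ) (hc : ∀ j, 0 ≤ c j) :
    ∃ ι : Fin r → Fin p, Function.Injective ι ∧
      ∑ i, d i * c (ι i) ≤ ∑ j, c j * ∑ i, d i * (V i j ^ 2 + H i j ^ 2) / 2 := by
  classical
  let σ := Tuple.sort c
  let ι : Fin r → Fin p := fun i => σ (Fin.castLE hrp i)
  have hι : Function.Injective ι := σ.injective.comp (Fin.castLE_injective hrp)
  refine ⟨ι, hι, ?_⟩
  -- rewrite RHS as ∑ i, d i * s i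
  set s : Fin r → ℝ := fun i => ∑ j, c j * ((V i j ^ 2 + H i j ^ 2) / 2) with hs
  have hRHS : ∑ j, c j * ∑ i, d i * (V i j ^ 2 + H i j ^ 2) / 2 = ∑ i, d i * s i := by
    simp_rw [Finset.mul_sum]
    rw [Finset.sum_comm]
    refine Finset.sum_congr rfl fun i _ => ?_
    rw [hs]
    simp only []
    rw [Finset.mul_sum]
    exact Finset.sum_congr rfl fun j _ => by ring
  rw [hRHS]
  -- partial sums inequality via smallest_sum_le and proj_bound
  have key : ∀ m, ∀ hm : m ≤ r, ∑ i : Fin m, c (ι (Fin.castLE hm i)) ≤ ∑ i : Fin m, s (Fin.castLE hm i) := by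
    intro m hm
    set q : Fin p → ℝ := fun j => ∑ i : Fin m, (V (Fin.castLE hm i) j ^ 2 + H (Fin.castLE hm i) j ^ 2) / 2 with hq
    have hsq : ∑ i : Fin m, s (Fin.castLE hm i) = ∑ j, c j * q j := by
      calc ∑ i : Fin m, s (Fin.castLE hm i)
          = ∑ i : Fin m, ∑ j, c j * ((V (Fin.castLE hm i) j ^ 2 + H (Fin.castLE hm i) j ^ 2) / 2) := rfl
        _ = ∑ j, ∑ i : Fin m, c j * ((V (Fin.castLE hm i) j ^ 2 + H (Fin.castLE hm i) j ^ 2) / 2) :=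
            Finset.sum_comm
        _ = ∑ j, c j * q j := Finset.sum_congr rfl fun j _ => by
            rw [hq]; exact (Finset.mul_sum _ _ _).symm
    set T : Finset (Fin p) := Finset.image (fun i : Fin m => ι (Fin.castLE hm i)) Finset.univ with hT
    have hinj : Function.Injective (fun i : Fin m => ι (Fin.castLE hm i)) :=
      hι.comp (Fin.castLE_injective hm)
    have hTcard : T.card = m := by
      rw [hT, Finset.card_image_of_injective _ hinj, Finset.card_univ, Fintype.card_fin]
    have hTsum : ∑ i : Fin m, c (ι (Fin.castLE hm i)) = ∑ j ∈ T, c j := by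
      rw [hT, Finset.sum_image (fun a _ b _ hab => hinj hab)]
    have hqnn : ∀ j ∈ (Finset.univ : Finset (Fin p)), 0 ≤ q j := fun j _ => by
      rw [hq]
      exact Finset.sum_nonneg fun i _ => by positivity
    have hminT : ∀ t ∈ T, ∀ j ∈ (Finset.univ : Finset (Fin p)), j ∉ T → c t ≤ c j := by
      intro t ht j _ hjT
      obtain ⟨i, _, hit⟩ := Finset.mem_image.mp ht
      set a := σ.symm j with ha
      have hja : j = σ a := (σ.apply_symm_apply j).symm
      have ham : m ≤ (a : ℕ) := by
        by_contra hlt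
        push_neg at hlt
        refine hjT (Finset.mem_image.mpr ⟨⟨a.val, hlt⟩, Finset.mem_univ _, ?_⟩)
        show ι (Fin.castLE hm ⟨a.val, hlt⟩) = j
        rw [hja]
        exact congrArg σ (Fin.ext rfl)
      have hle : (Fin.castLE hrp (Fin.castLE hm i)) ≤ a := by
        rw [Fin.le_def]
        have : (i : ℕ) < m := i.isLt
        simp only [Fin.coe_castLE]
        omega
      have := Tuple.monotone_sort c hle
      rw [← hit, hja]
      exact this
    have hSbound : ∀ S ⊆ (Finset.univ : Finset (Fin p)),
        (m : ℝ) - (((Finset.univ : Finset (Fin p)).card : ℝ) - (S.card : ℝ)) ≤ ∑ j ∈ S, q j := by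
      intro S _
      have := proj_bound V H hVH hm S
      rw [Finset.card_univ, Fintype.card_fin]
      have hqS : ∑ j ∈ S, q j = ∑ j ∈ S, ∑ i : Fin m, (V (Fin.castLE hm i) j ^ 2 + H (Fin.castLE hm i) j ^ 2) / 2 := rfl
      rw [hqS]
      linarith
    rw [hTsum, hsq]
    exact smallest_sum_le m Finset.univ T q c (Finset.subset_univ T) hTcard hqnn
      (fun j _ => hc j) hminT hSbound
  -- Abel summation
  set Dn : ℕ → ℝ := fun n => if h : n < r then d ⟨n, h⟩ else 0 with hDn
  set Cn : ℕ → ℝ := fun n => if h : n < r then c (ι ⟨n, h⟩) else 0 with hCn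
  set Sn : ℕ → ℝ := fun n => if h : n < r then s ⟨n, h⟩ else 0 with hSn
  have hD : ∀ n, n < r → Dn (n+1) ≤ Dn n := by
    intro n hn
    rw [hDn]
    simp only []
    rw [dif_pos hn]
    by_cases h1 : n + 1 < r
    · rw [dif_pos h1]
      exact hdA (Fin.mk_le_mk.mpr (Nat.le_succ n))
    · rw [dif_neg h1]
      exact hd0 _
  have hDr : 0 ≤ Dn r := by rw [hDn]; simp
  have hx : ∀ n, n ≤ r → 0 ≤ ∑ i ∈ Finset.range n, (Sn i - Cn i) := by
    intro n hn
    rw [Finset.sum_sub_distrib]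
    have e1 : ∑ i ∈ Finset.range n, Sn i = ∑ i : Fin n, s (Fin.castLE hn i) := by
      rw [← Fin.sum_univ_eq_sum_range]
      refine Finset.sum_congr rfl fun i _ => ?_
      rw [hSn]
      simp only []
      rw [dif_pos (lt_of_lt_of_le i.isLt hn)]
      rfl
    have e2 : ∑ i ∈ Finset.range n, Cn i = ∑ i : Fin n, c (ι (Fin.castLE hn i)) := by
      rw [← Fin.sum_univ_eq_sum_range]
      refine Finset.sum_congr rfl fun i _ => ?_
      rw [hCn]
      simp only []
      rw [dif_pos (lt_of_lt_of_le i.isLt hn)]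
      rfl
    rw [e1, e2]
    have := key n hn
    linarith
  have habel := abel_nonneg r Dn (fun n => Sn n - Cn n) hD hDr hx
  have efin : ∑ i ∈ Finset.range r, Dn i * (Sn i - Cn i) = ∑ i : Fin r, d i * (s i - c (ι i)) := by
    rw [← Fin.sum_univ_eq_sum_range]
    refine Finset.sum_congr rfl fun i _ => ?_
    rw [hDn, hSn, hCn]
    simp only []
    rw [dif_pos i.isLt, dif_pos i.isLt, dif_pos i.isLt]
  rw [efin] at habel
  have : ∑ i : Fin r, d i * (s i - c (ι i)) = (∑ i, d i * s i) - ∑ i, d i * c (ι i) := by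
    rw [← Finset.sum_sub_distrib]
    exact Finset.sum_congr rfl fun i _ => by ring
  linarith [this ▸ habel]

/-- In the rectangular case (V, H ∈ ℝ^{r×p}, p > r, V Hᵀ = I), if the problem
min f(γ) over γ = (1/2)(Vᵀ⊙Vᵀ + Hᵀ⊙Hᵀ)σ admits a minimizer, then there is a
minimizer which is a permutation of the zero-padded singular value vector
(σ₁,…,σ_r,0,…,0). -/
theorem rectangular_minimizer_is_padded_permutation {r p : ℕ} (hrp : r < p)
    (d : Fin r → ℝ) (hd0 : ∀ i, 0 < d i) (hdA : Antitone d)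
    (f : (Fin p → ℝ) → ℝ)
    (hqc : ∀ α : ℝ, Convex ℝ {x : Fin p → ℝ | (∀ i, 0 ≤ x i) ∧ α ≤ f x})
    (hlsc : LowerSemicontinuous f)
    (hmono : ∀ x y : Fin p → ℝ, (∀ i, x i ≤ y i) → f x ≤ f y)
    (F : Set (Fin p → ℝ))
    (hF : F = {γ | ∃ V H : Matrix (Fin r) (Fin p) ℝ, V * Hᵀ = 1 ∧
        γ = fun j => ∑ i, d i * (V i j ^ 2 + H i j ^ 2) / 2}) :
    (∃ γ₀ ∈ F, ∀ γ ∈ F, f γ₀ ≤ f γ) →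
    ∃ γs ∈ F, (∀ γ ∈ F, f γs ≤ f γ) ∧
      ∃ ι : Fin r → Fin p, Function.Injective ι ∧
        γs = fun j => ∑ i, if ι i = j then d i else 0 := by
  classical
  intro _
  set pad : (Fin r → Fin p) → (Fin p → ℝ) := fun ι j => ∑ i, if ι i = j then d i else 0 with hpad
  -- padded permutations are feasible
  have hpadF : ∀ ι : Fin r → Fin p, Function.Injective ι → pad ι ∈ F := by
    intro ι hι
    rw [hF]
    refine ⟨Matrix.of (fun i j => if ι i = j then (1:ℝ) else 0),
            Matrix.of (fun i j => if ι i = j then (1:ℝ) else 0), ?_, ?_⟩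
    · ext i k
      rw [Matrix.mul_apply, Matrix.one_apply]
      simp only [Matrix.transpose_apply, Matrix.of_apply]
      have : ∀ j, (if ι i = j then (1:ℝ) else 0) * (if ι k = j then (1:ℝ) else 0)
          = if ι i = j then (if ι k = j then (1:ℝ) else 0) else 0 := by
        intro j; split <;> simp
      rw [Finset.sum_congr rfl fun j _ => this j, Finset.sum_ite_eq]
      simp [hι.eq_iff, eq_comm]
    · funext j
      rw [hpad]
      refine Finset.sum_congr rfl fun i _ => ?_
      by_cases h : ι i = j
      · simp only [Matrix.of_apply, h, if_pos rfl]
        norm_num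
      · simp [Matrix.of_apply, h]
  -- the finite set of injections and the best padded permutation
  set Sinj : Finset (Fin r → Fin p) := Finset.univ.filter (fun ι => Function.Injective ι) with hSinj
  have hne : Sinj.Nonempty :=
    ⟨Fin.castLE hrp.le, Finset.mem_filter.mpr ⟨Finset.mem_univ _, Fin.castLE_injective _⟩⟩
  obtain ⟨ιs, hιsmem, hmin⟩ := Finset.exists_min_image Sinj (fun ι => f (pad ι)) hne
  have hιsinj : Function.Injective ιs := (Finset.mem_filter.mp hιsmem).2
  -- convex-geometric setup
  set P : Set (Fin p → ℝ) := pad '' {ι | Function.Injective ι} with hP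
  set Cn : Set (Fin p → ℝ) := {w | ∀ j, 0 ≤ w j} with hCn
  set K : Set (Fin p → ℝ) := convexHull ℝ P + Cn with hK
  have hPfin : P.Finite := (Set.finite_range pad).subset (Set.image_subset_range _ _)
  have hConeConv : Convex ℝ Cn := by
    intro x hx y hy a b ha hb hab
    intro j
    have : (a • x + b • y) j = a * x j + b * y j := rfl
    rw [this]
    exact add_nonneg (mul_nonneg ha (hx j)) (mul_nonneg hb (hy j))
  have hConeClosed : IsClosed Cn := by
    have : Cn = ⋂ j, {w : Fin p → ℝ | 0 ≤ w j} := by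
      ext w; simp [hCn, Set.mem_iInter]
    rw [this]
    exact isClosed_iInter fun j => isClosed_le continuous_const (continuous_apply j)
  have hKconv : Convex ℝ K := (convex_convexHull ℝ P).add hConeConv
  have hKclosed : IsClosed K := hConeClosed.add_left_of_isCompact (hPfin.isCompact_convexHull (𝕜 := ℝ))
  have hpadK : ∀ ι : Fin r → Fin p, Function.Injective ι → pad ι ∈ K := by
    intro ι hι
    rw [hK]
    exact Set.mem_add.mpr ⟨pad ι, subset_convexHull ℝ P ⟨ι, hι, rfl⟩, 0, (fun j => le_refl 0 : (0 : Fin p → ℝ) ∈ Cn), add_zero _⟩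
  -- every feasible point lies in K
  have hγK : ∀ γ ∈ F, γ ∈ K := by
    intro γ hγ
    rw [hF] at hγ
    obtain ⟨V, H, hVH, hγeq⟩ := hγ
    by_contra hnot
    obtain ⟨φ, u, hφγ, hφK⟩ := geometric_hahn_banach_point_closed hKconv hKclosed hnot
    set c : Fin p → ℝ := fun j => φ (Pi.single j 1) with hc
    have hφeq : ∀ x : Fin p → ℝ, φ x = ∑ j, x j * c j := by
      intro x
      have hx1 : ∀ j : Fin p, x j • (Pi.single j (1:ℝ) : Fin p → ℝ) = (Pi.single j (x j) : Fin p → ℝ) := by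
        intro j; funext k
        simp [Pi.single_apply]
      have hx : x = ∑ j, x j • (Pi.single j (1:ℝ) : Fin p → ℝ) := by
        rw [Finset.sum_congr rfl fun j _ => hx1 j, Finset.univ_sum_single]
      conv_lhs => rw [hx]
      rw [map_sum]
      exact Finset.sum_congr rfl fun j _ => by rw [_root_.map_smul, smul_eq_mul, hc]
    have hcnn : ∀ j, 0 ≤ c j := by
      intro j
      by_contra hneg
      push_neg at hneg
      set ι0 : Fin r → Fin p := Fin.castLE hrp.le with hι0def
      have hι0 : Function.Injective ι0 := Fin.castLE_injective _
      have hφb : u < φ (pad ι0) := hφK _ (hpadK ι0 hι0)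
      set t : ℝ := (φ (pad ι0) - u + 1) / (-c j) with ht'
      have ht : 0 < t := div_pos (by linarith) (by linarith)
      have hmem : pad ι0 + t • (Pi.single j (1:ℝ) : Fin p → ℝ) ∈ K := by
        rw [hK]
        refine Set.mem_add.mpr ⟨pad ι0, subset_convexHull ℝ P ⟨ι0, hι0, rfl⟩,
          t • (Pi.single j (1:ℝ) : Fin p → ℝ), ?_, rfl⟩
        intro k
        have : (t • (Pi.single j (1:ℝ) : Fin p → ℝ)) k = t * (Pi.single j (1:ℝ) : Fin p → ℝ) k := rfl
        rw [this]
        by_cases h : k = j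
        · rw [h]; simp only [Pi.single_eq_same, mul_one]; exact ht.le
        · simp [Pi.single_apply, h]
      have hlt := hφK _ hmem
      rw [map_add, _root_.map_smul, smul_eq_mul] at hlt
      have hψ : φ (Pi.single j 1) = c j := by rw [hc]
      rw [hψ] at hlt
      have htc : t * c j = -(φ (pad ι0) - u + 1) := by
        rw [ht']
        calc (φ (pad ι0) - u + 1) / (-c j) * c j
            = (φ (pad ι0) - u + 1) * (c j / (-c j)) := by ring
          _ = -(φ (pad ι0) - u + 1) := by
              rw [div_neg, div_self (ne_of_lt hneg)]; ring
      rw [htc] at hlt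
      linarith
    obtain ⟨ι, hιinj, hstar⟩ := star_lemma hrp.le d (fun i => (hd0 i).le) hdA V H hVH c hcnn
    have hφγval : φ γ = ∑ j, c j * γ j := by
      rw [hφeq]
      exact Finset.sum_congr rfl fun j _ => mul_comm _ _
    have hγval : ∑ j, c j * γ j = ∑ j, c j * ∑ i, d i * (V i j ^ 2 + H i j ^ 2) / 2 := by
      rw [hγeq]
    have hpadval : φ (pad ι) = ∑ i, d i * c (ι i) := by
      rw [hφeq]
      calc ∑ j, pad ι j * c j
          = ∑ j, ∑ i, (if ι i = j then d i else 0) * c j := by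
            exact Finset.sum_congr rfl fun j _ => Finset.sum_mul _ _ _
        _ = ∑ i, ∑ j, (if ι i = j then d i else 0) * c j := Finset.sum_comm
        _ = ∑ i, d i * c (ι i) := by
            refine Finset.sum_congr rfl fun i _ => ?_
            have : ∀ j, (if ι i = j then d i else 0) * c j
                = if ι i = j then d i * c j else 0 := by
              intro j; split <;> simp
            rw [Finset.sum_congr rfl fun j _ => this j, Finset.sum_ite_eq]
            simp
    have h1 : u < φ (pad ι) := hφK _ (hpadK ι hιinj)
    have h2 : φ (pad ι) ≤ φ γ := by
      rw [hpadval, hφγval, hγval]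
      exact hstar
    linarith
  -- conclusion
  refine ⟨pad ιs, hpadF ιs hιsinj, ?_, ιs, hιsinj, rfl⟩
  intro γ hγ
  obtain ⟨z, hz, w, hw, hzw⟩ := Set.mem_add.mp (hγK γ hγ)
  set α := f (pad ιs) with hα
  have hPsub : P ⊆ {x : Fin p → ℝ | (∀ i, 0 ≤ x i) ∧ α ≤ f x} := by
    rintro x ⟨ι, hι, rfl⟩
    constructor
    · intro j
      refine Finset.sum_nonneg fun i _ => ?_
      by_cases h : ι i = j
      · simp [h, (hd0 i).le]
      · simp [h]
    · exact hmin ι (Finset.mem_filter.mpr ⟨Finset.mem_univ _, hι⟩)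
  have hz2 := convexHull_min hPsub (hqc α) hz
  have hzγ : ∀ j, z j ≤ γ j := by
    intro j
    have h1 : γ j = z j + w j := by rw [← hzw]; rfl
    have h2 := hw j
    linarith
  calc f (pad ιs) = α := rfl
    _ ≤ f z := hz2.2
    _ ≤ f γ := hmono z γ hzγ
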